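/- Let D be a central division algebra of prime degree p over a field F of characteristic not p containing a primitive p-th root of unity ρ, and suppose x, z ∈ D with x^p ∈ F^×, z^p ∈ F^×, both noncentral. Write z = z_i + z_j with z_i x = ρ^i x z_i, z_j x = ρ^j x z_j for i ≠ j (i.e. only two eigencomponents of z with respect to conjugation by x are nonzero). Then z_i^p ∈ F and z_j^p ∈ F; in particular z^p = z_i^p + z_j^p. -/
import Mathlib

open Polynomial Finset

section Aux
variable {F D : Type*} [Field F] [DivisionRing D] [Algebra F D]

/-- multiplicativity of the eigen-relation -/
lemma rel_mul {ρ : F} {x y₁ y₂ : D} {m₁ m₂ : ℕ}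
    (h₁ : y₁ * x = ρ ^ m₁ • (x * y₁)) (h₂ : y₂ * x = ρ ^ m₂ • (x * y₂)) :
    (y₁ * y₂) * x = ρ ^ (m₁ + m₂) • (x * (y₁ * y₂)) := by
  calc y₁ * y₂ * x = y₁ * (y₂ * x) := by rw [mul_assoc]
    _ = y₁ * (ρ ^ m₂ • (x * y₂)) := by rw [h₂]
    _ = ρ ^ m₂ • (y₁ * x * y₂) := by rw [mul_smul_comm, mul_assoc]
    _ = ρ ^ m₂ • ((ρ ^ m₁ • (x * y₁)) * y₂) := by rw [h₁]
    _ = ρ ^ (m₁ + m₂) • (x * (y₁ * y₂)) := by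
        rw [smul_mul_assoc, smul_smul, pow_add, mul_comm (ρ ^ m₂), mul_assoc]

lemma rel_pow {ρ : F} {x y : D} {m : ℕ}
    (h : y * x = ρ ^ m • (x * y)) (n : ℕ) :
    y ^ n * x = ρ ^ (m * n) • (x * y ^ n) := by
  induction n with
  | zero => simp
  | succ n ih =>
      have := rel_mul ih h
      rw [← pow_succ] at this
      rw [this]
      ring_nf

lemma rel_xpow {ρ : F} {x y : D} {m : ℕ}
    (h : y * x = ρ ^ m • (x * y)) (n : ℕ) :
    y * x ^ n = ρ ^ (m * n) • (x ^ n * y) := by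
  induction n with
  | zero => simp
  | succ n ih =>
      calc y * x ^ (n + 1) = y * x ^ n * x := by rw [pow_succ, mul_assoc]
        _ = (ρ ^ (m * n) • (x ^ n * y)) * x := by rw [ih]
        _ = ρ ^ (m * n) • (x ^ n * (y * x)) := by rw [smul_mul_assoc, mul_assoc]
        _ = ρ ^ (m * n) • (x ^ n * (ρ ^ m • (x * y))) := by rw [h]
        _ = ρ ^ (m * (n + 1)) • (x ^ (n + 1) * y) := by
            rw [mul_smul_comm, smul_smul, ← pow_add, ← mul_assoc, ← pow_succ]
            ring_nf

lemma rel_sum {ρ : F} {x : D} {m : ℕ} {ι : Type*} (s : Finset ι) (f : ι → D)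
    (h : ∀ a ∈ s, f a * x = ρ ^ m • (x * f a)) :
    (∑ a ∈ s, f a) * x = ρ ^ m • (x * ∑ a ∈ s, f a) := by
  rw [sum_mul, mul_sum, smul_sum]
  exact sum_congr rfl h

/-- reduce the exponent mod p -/
lemma rel_mod {p : ℕ} (hp : 0 < p) {ρ : F} (hρ : IsPrimitiveRoot ρ p) (m : ℕ) :
    ρ ^ m = ρ ^ (m % p) := by
  conv_lhs => rw [← Nat.div_add_mod m p]
  rw [pow_add, pow_mul, hρ.pow_eq_one, one_pow, one_mul]

end Aux


section Aux2
variable {F D : Type*} [Field F] [DivisionRing D] [Algebra F D]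

lemma geom_zero {p : ℕ} {ρ : F} (hρ : IsPrimitiveRoot ρ p) {c : ℕ} (hc : ¬ p ∣ c) :
    ∑ m ∈ range p, ρ ^ (c * m) = 0 := by
  have h1 : (ρ ^ c) ≠ 1 := fun h => hc ((hρ.pow_eq_one_iff_dvd c).1 h)
  have h2 : ∑ m ∈ range p, (ρ ^ c) ^ m = 0 := by
    have := geom_sum_mul (ρ ^ c) p
    rw [← pow_mul, mul_comm c p, pow_mul, hρ.pow_eq_one, one_pow, sub_self] at this
    rcases mul_eq_zero.1 this with h | h
    · exact h
    · exact absurd (sub_eq_zero.1 h) h1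
  simpa [← pow_mul, mul_comm] using h2

/-- independence of eigencomponents -/
lemma eigen_indep {p : ℕ} (hp : 0 < p) (hpF : (p : F) ≠ 0) {ρ : F}
    (hρ : IsPrimitiveRoot ρ p) {x : D} (hx : x ≠ 0) (v : ℕ → D)
    (hv : ∀ a ∈ range p, v a * x = ρ ^ a • (x * v a))
    (hsum : ∑ a ∈ range p, v a = 0) : ∀ b ∈ range p, v b = 0 := by
  have h1 : ∀ m : ℕ, ∑ a ∈ range p, ρ ^ (a * m) • v a = 0 := by
    intro m
    have e1 : (∑ a ∈ range p, v a) * x ^ m = 0 := by rw [hsum, zero_mul]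
    rw [sum_mul] at e1
    have e2 : ∀ a ∈ range p, v a * x ^ m = ρ ^ (a * m) • (x ^ m * v a) := by
      intro a ha; exact rel_xpow (hv a ha) m
    rw [sum_congr rfl e2] at e1
    have e3 : ∑ a ∈ range p, ρ ^ (a * m) • (x ^ m * v a)
        = x ^ m * ∑ a ∈ range p, ρ ^ (a * m) • v a := by
      rw [mul_sum]
      exact sum_congr rfl fun a _ => (mul_smul_comm _ _ _).symm
    rw [e3] at e1
    rcases mul_eq_zero.1 e1 with h | h
    · exact absurd h (pow_ne_zero m hx)
    · exact h
  intro b hb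
  have hb' : b < p := mem_range.1 hb
  have h2 : ∑ m ∈ range p, ρ ^ ((p - b) * m) • (∑ a ∈ range p, ρ ^ (a * m) • v a) = 0 := by
    simp [h1]
  have h3 : ∑ m ∈ range p, ∑ a ∈ range p, ρ ^ ((p - b + a) * m) • v a = 0 := by
    rw [← h2]
    refine sum_congr rfl fun m _ => ?_
    rw [smul_sum]
    refine sum_congr rfl fun a _ => ?_
    rw [smul_smul, ← pow_add, add_mul]
  rw [Finset.sum_comm] at h3
  have h3' : ∑ a ∈ range p, (∑ m ∈ range p, ρ ^ ((p - b + a) * m)) • v a = 0 := by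
    rw [← h3]
    exact sum_congr rfl fun a _ => Finset.sum_smul
  have h4 : ∀ a ∈ range p, a ≠ b → (∑ m ∈ range p, ρ ^ ((p - b + a) * m)) • v a = 0 := by
    intro a ha hab
    have ha' : a < p := mem_range.1 ha
    have hnd : ¬ p ∣ (p - b + a) := by
      intro hdvd
      obtain ⟨c, hc⟩ := hdvd
      rcases Nat.lt_or_ge c 2 with h2 | h2
      · interval_cases c <;> omega
      · have hle : 2 * p ≤ p * c := by
          calc 2 * p = p * 2 := by ring
            _ ≤ p * c := Nat.mul_le_mul_left p h2
        omega
    rw [geom_zero hρ hnd, zero_smul]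
  rw [Finset.sum_eq_single_of_mem b hb (fun a ha hab => h4 a ha hab)] at h3'
  have h5 : (∑ m ∈ range p, ρ ^ ((p - b + b) * m)) = (p : F) := by
    have : ∀ m ∈ range p, ρ ^ ((p - b + b) * m) = 1 := by
      intro m _
      have : p - b + b = p := by omega
      rw [this, pow_mul, hρ.pow_eq_one, one_pow]
    rw [sum_congr rfl this, sum_const, card_range, nsmul_eq_mul, mul_one]
  rw [h5] at h3'
  exact (smul_eq_zero.1 h3').resolve_left hpF

end Aux2

section Aux3
variable {F D : Type*} [Field F] [DivisionRing D] [Algebra F D]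

lemma no_pth_root {p : ℕ} (hp : p.Prime) {ρ : F} (hρ : IsPrimitiveRoot ρ p)
    {x : D} {α : F} (hα : α ≠ 0) (hxp : x ^ p = algebraMap F D α)
    (hxnc : ∀ s : F, x ≠ algebraMap F D s) : ∀ γ : F, γ ^ p ≠ α := by
  intro γ hγ
  have hγ0 : γ ≠ 0 := by
    rintro rfl
    rw [zero_pow hp.ne_zero] at hγ
    exact hα hγ.symm
  set g : D := algebraMap F D γ with hg
  have hg0 : g ≠ 0 := fun h => hγ0 ((algebraMap F D).injective (by rw [← hg, h, map_zero]))
  set t : D := x * g⁻¹ with hgt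
  have hginv : g⁻¹ = algebraMap F D γ⁻¹ := by rw [hg, map_inv₀]
  have hcomm : Commute x g⁻¹ := by rw [hginv]; exact (Algebra.commutes γ⁻¹ x).symm
  have ht : t ^ p = 1 := by
    rw [hgt, hcomm.mul_pow, hxp, hginv, ← map_pow, ← map_mul, inv_pow, ← hγ,
      mul_inv_cancel₀ (pow_ne_zero p hγ0), map_one]
  have hne : ∀ u : F, t ≠ algebraMap F D u := by
    intro u h
    apply hxnc (u * γ)
    have : t * g = x := by
      rw [hgt, mul_assoc, inv_mul_cancel₀ hg0, mul_one]
    rw [← this, h, hg, ← map_mul]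
  have key : ∀ s : Finset F, (Polynomial.aeval t (∏ u ∈ s, (Polynomial.X - Polynomial.C u)) : D) ≠ 0 := by
    intro s
    classical
    induction s using Finset.induction with
    | empty => simp
    | @insert a s hni ih =>
        rw [Finset.prod_insert hni, map_mul]
        apply mul_ne_zero _ ih
        rw [map_sub, Polynomial.aeval_X, Polynomial.aeval_C]
        exact sub_ne_zero.2 (hne a)
  have hzero : (Polynomial.aeval (R := F) t (Polynomial.X ^ p - 1) : D) = 0 := by
    rw [map_sub, map_pow, Polynomial.aeval_X, map_one, ht, sub_self]
  rw [Polynomial.X_pow_sub_one_eq_prod hp.pos hρ] at hzero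
  exact key _ hzero

lemma xpow_indep {p : ℕ} (hp : p.Prime) {ρ : F} (hρ : IsPrimitiveRoot ρ p)
    {x : D} {α : F} (hα : α ≠ 0) (hxp : x ^ p = algebraMap F D α)
    (hxnc : ∀ s : F, x ≠ algebraMap F D s)
    (c : ℕ → F) (h : ∑ k ∈ range p, c k • x ^ k = 0) : ∀ k ∈ range p, c k = 0 := by
  have hirr : Irreducible (Polynomial.X ^ p - Polynomial.C α) :=
    X_pow_sub_C_irreducible_of_prime hp (no_pth_root hp hρ hα hxp hxnc)
  have haev : (Polynomial.aeval x (Polynomial.X ^ p - Polynomial.C α) : D) = 0 := by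
    rw [map_sub, map_pow, Polynomial.aeval_X, Polynomial.aeval_C, hxp, sub_self]
  have hmp : minpoly F x = Polynomial.X ^ p - Polynomial.C α :=
    (minpoly.eq_of_irreducible_of_monic hirr haev (Polynomial.monic_X_pow_sub_C α hp.ne_zero)).symm
  by_contra hcon
  push_neg at hcon
  obtain ⟨k, hk, hck⟩ := hcon
  set f : Polynomial F := ∑ l ∈ range p, Polynomial.C (c l) * Polynomial.X ^ l with hf
  have hfx : (Polynomial.aeval x f : D) = 0 := by
    rw [hf, map_sum, ← h]
    refine sum_congr rfl fun l _ => ?_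
    rw [map_mul, map_pow, Polynomial.aeval_X, Polynomial.aeval_C, Algebra.smul_def]
  have hcoeff : f.coeff k = c k := by
    rw [hf, Polynomial.finset_sum_coeff]
    rw [Finset.sum_eq_single_of_mem k hk]
    · simp
    · intro l _ hlk
      simp [Polynomial.coeff_C_mul, Polynomial.coeff_X_pow, (Ne.symm hlk)]
  have hf0 : f ≠ 0 := fun h0 => hck (by rw [← hcoeff, h0, Polynomial.coeff_zero])
  have hdeg : f.degree < (p : WithBot ℕ) := by
    rw [hf]
    apply lt_of_le_of_lt (Polynomial.degree_sum_le _ _)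
    rw [Finset.sup_lt_iff (by exact_mod_cast WithBot.bot_lt_coe p)]
    intro l hl
    exact lt_of_le_of_lt (Polynomial.degree_C_mul_X_pow_le l (c l))
      (by exact_mod_cast Nat.cast_lt.2 (mem_range.1 hl))
  have := minpoly.degree_le_of_ne_zero F x hf0 hfx
  rw [hmp, Polynomial.degree_X_pow_sub_C hp.pos] at this
  exact absurd (lt_of_le_of_lt this hdeg) (lt_irrefl _)

end Aux3

section Aux4
variable {F D : Type*} [Field F] [DivisionRing D] [Algebra F D]

lemma exists_expansion {ρ : F} {x zi zj : D} {i j : ℕ}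
    (hziX : zi * x = ρ ^ i • (x * zi)) (hzjX : zj * x = ρ ^ j • (x * zj)) (n : ℕ) :
    ∃ w : ℕ → D, (∑ a ∈ range (n + 1), w a = (zi + zj) ^ n) ∧
      (∀ a, a ≤ n → w a * x = ρ ^ (a * i + (n - a) * j) • (x * w a)) ∧
      (∀ a, n < a → w a = 0) ∧ w 0 = zj ^ n ∧ w n = zi ^ n := by
  induction n with
  | zero =>
      refine ⟨fun a => if a = 0 then 1 else 0, by simp, by simp [Nat.le_zero], ?_, by simp, by simp⟩
      intro a ha
      simp [Nat.pos_iff_ne_zero.mp ha]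
  | succ n ih =>
      obtain ⟨w, hsum, hrel, hbig, h0, hn⟩ := ih
      refine ⟨fun a => (if a = 0 then 0 else w (a - 1) * zi) + w a * zj, ?_, ?_, ?_, ?_, ?_⟩
      · have e1 : ∑ a ∈ range (n + 2), (if a = 0 then (0:D) else w (a - 1) * zi)
            = ∑ a ∈ range (n + 1), w a * zi := by
          rw [Finset.sum_range_succ' _ (n + 1)]
          simp
        have e2 : ∑ a ∈ range (n + 2), w a * zj = ∑ a ∈ range (n + 1), w a * zj := by
          rw [Finset.sum_range_succ, hbig (n + 1) (by omega), zero_mul, add_zero]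
        rw [Finset.sum_add_distrib, e1, e2, ← Finset.sum_mul, ← Finset.sum_mul, hsum,
          ← mul_add, ← pow_succ]
      · intro a ha
        have hj' : ∀ b, b ≤ n → (w b * zj) * x = ρ ^ (b * i + (n + 1 - b) * j) • (x * (w b * zj)) := by
          intro b hb
          have := rel_mul (hrel b hb) hzjX
          have he : b * i + (n - b) * j + j = b * i + (n + 1 - b) * j := by
            have : n + 1 - b = (n - b) + 1 := by omega
            rw [this]; ring
          rwa [he] at this
        rcases Nat.eq_zero_or_pos a with rfl | hpos
        · simpa using hj' 0 (by omega)
        · obtain ⟨b, rfl⟩ : ∃ b, a = b + 1 := ⟨a - 1, by omega⟩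
          simp only [Nat.add_sub_cancel, if_neg (Nat.succ_ne_zero b)]
          have hb : b ≤ n := by omega
          have hi' : (w b * zi) * x = ρ ^ ((b + 1) * i + (n + 1 - (b + 1)) * j) • (x * (w b * zi)) := by
            have := rel_mul (hrel b hb) hziX
            have he : b * i + (n - b) * j + i = (b + 1) * i + (n + 1 - (b + 1)) * j := by
              have : n + 1 - (b + 1) = n - b := by omega
              rw [this]; ring
            rwa [he] at this
          rcases Nat.lt_or_ge b n with hbn | hbn
          · have hj'' := hj' (b + 1) (by omega)
            rw [add_mul, hi', hj'', mul_add, smul_add]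
          · have hbe : b = n := by omega
            subst hbe
            rw [hbig (b + 1) (by omega), zero_mul, add_zero]
            exact hi'
      · intro a ha
        show (if a = 0 then (0:D) else w (a - 1) * zi) + w a * zj = 0
        rw [hbig a (by omega), hbig (a - 1) (by omega), zero_mul, zero_mul, add_zero, ite_self]
      · simp [h0, pow_succ]
      · show (if n + 1 = 0 then (0:D) else w (n + 1 - 1) * zi) + w (n + 1) * zj = zi ^ (n + 1)
        rw [if_neg (Nat.succ_ne_zero n), Nat.add_sub_cancel, hn, hbig (n + 1) (by omega),
          zero_mul, add_zero, ← pow_succ]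

end Aux4

section Aux5
variable {F D : Type*} [Field F] [DivisionRing D] [Algebra F D]

lemma pcentral_aux {p : ℕ} (hp : p.Prime) (hpF : (p : F) ≠ 0) {ρ : F}
    (hρ : IsPrimitiveRoot ρ p)
    (hcentral : ∀ a : D, (∀ b : D, a * b = b * a) → ∃ c : F, a = algebraMap F D c)
    (hdim : Module.finrank F D = p ^ 2)
    {x : D} {α : F} (hα : α ≠ 0) (hxp : x ^ p = algebraMap F D α)
    (hxnc : ∀ s : F, x ≠ algebraMap F D s)
    (y : D) (m : ℕ) (hm0 : 0 < m) (hmp : m < p) (hy0 : y ≠ 0)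
    (hyX : y * x = ρ ^ m • (x * y)) : ∃ c : F, y ^ p = algebraMap F D c := by
  haveI : Fact p.Prime := ⟨hp⟩
  have hx0 : x ≠ 0 := fun h => hxnc 0 (by rw [h, map_zero])
  have hLI : LinearIndependent F (fun kl : Fin p × Fin p => x ^ (kl.1 : ℕ) * y ^ (kl.2 : ℕ)) := by
    rw [Fintype.linearIndependent_iff]
    intro g hg
    have hzero : ∀ l k : Fin p, g (k, l) = 0 := by
      have hre : ∑ l : Fin p, (∑ k : Fin p, g (k, l) • x ^ (k : ℕ)) * y ^ (l : ℕ) = 0 := by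
        calc ∑ l : Fin p, (∑ k : Fin p, g (k, l) • x ^ (k : ℕ)) * y ^ (l : ℕ)
            = ∑ l : Fin p, ∑ k : Fin p, g (k, l) • (x ^ (k : ℕ) * y ^ (l : ℕ)) := by
              refine Finset.sum_congr rfl fun l _ => ?_
              rw [Finset.sum_mul]
              exact Finset.sum_congr rfl fun k _ => smul_mul_assoc _ _ _
          _ = ∑ kl : Fin p × Fin p, g kl • (x ^ (kl.1 : ℕ) * y ^ (kl.2 : ℕ)) := by
              rw [Fintype.sum_prod_type_right]
          _ = 0 := hg
      set v : ℕ → D := fun b =>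
        ∑ l ∈ Finset.univ.filter (fun l : Fin p => (m * (l : ℕ)) % p = b),
          (∑ k : Fin p, g (k, l) • x ^ (k : ℕ)) * y ^ (l : ℕ) with hvdef
      have hWx : ∀ l : Fin p, (∑ k : Fin p, g (k, l) • x ^ (k : ℕ)) * x
          = ρ ^ 0 • (x * ∑ k : Fin p, g (k, l) • x ^ (k : ℕ)) := by
        intro l
        rw [pow_zero, one_smul, Finset.sum_mul, Finset.mul_sum]
        refine Finset.sum_congr rfl fun k _ => ?_
        rw [smul_mul_assoc, mul_smul_comm, ← pow_succ, ← pow_succ']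
      have hvrel : ∀ b ∈ Finset.range p, v b * x = ρ ^ b • (x * v b) := by
        intro b hb
        rw [hvdef]
        apply rel_sum
        intro l hl
        rw [Finset.mem_filter] at hl
        have h1 := rel_mul (hWx l) (rel_pow hyX (l : ℕ))
        rw [zero_add, rel_mod hp.pos hρ (m * (l : ℕ)), hl.2] at h1
        exact h1
      have hvsum : ∑ b ∈ Finset.range p, v b = 0 := by
        rw [hvdef]
        rw [Finset.sum_fiberwise_of_maps_to
          (fun l _ => Finset.mem_range.2 (Nat.mod_lt _ hp.pos))]
        exact hre
      have hv0 := eigen_indep hp.pos hpF hρ hx0 v hvrel hvsum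
      intro l
      have hfl : Finset.univ.filter (fun l' : Fin p => (m * (l' : ℕ)) % p = (m * (l : ℕ)) % p)
          = {l} := by
        ext l'
        simp only [Finset.mem_filter, Finset.mem_univ, true_and, Finset.mem_singleton]
        constructor
        · intro h
          have hcast : ((m * (l' : ℕ) : ℕ) : ZMod p) = ((m * (l : ℕ) : ℕ) : ZMod p) :=
            (ZMod.natCast_eq_natCast_iff _ _ _).2 h
          push_cast at hcast
          have hm' : (m : ZMod p) ≠ 0 := by
            rw [Ne, ZMod.natCast_eq_zero_iff]
            exact fun hd => absurd (Nat.le_of_dvd hm0 hd) (not_le.2 hmp)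
          have hll : ((l' : ℕ) : ZMod p) = ((l : ℕ) : ZMod p) := mul_left_cancel₀ hm' hcast
          have := congrArg ZMod.val hll
          rw [ZMod.val_cast_of_lt l'.isLt, ZMod.val_cast_of_lt l.isLt] at this
          exact Fin.ext this
        · rintro rfl; rfl
      have hterm : (∑ k : Fin p, g (k, l) • x ^ (k : ℕ)) * y ^ (l : ℕ) = 0 := by
        have := hv0 ((m * (l : ℕ)) % p) (Finset.mem_range.2 (Nat.mod_lt _ hp.pos))
        rw [hvdef] at this
        simp only [hfl, Finset.sum_singleton] at this
        exact this
      have hW0 : ∑ k : Fin p, g (k, l) • x ^ (k : ℕ) = 0 :=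
        (mul_eq_zero.1 hterm).resolve_right (pow_ne_zero _ hy0)
      set c : ℕ → F := fun k => if hk : k < p then g (⟨k, hk⟩, l) else 0 with hcdef
      have hcs : ∑ k ∈ Finset.range p, c k • x ^ k = 0 := by
        rw [Finset.sum_range fun k => c k • x ^ k, ← hW0]
        refine Finset.sum_congr rfl fun k _ => ?_
        simp [hcdef, k.isLt]
      intro k
      have := xpow_indep hp hρ hα hxp hxnc c hcs (k : ℕ) (Finset.mem_range.2 k.isLt)
      rw [hcdef] at this
      simpa [k.isLt] using this
    intro kl
    exact hzero kl.2 kl.1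
  haveI : Nonempty (Fin p × Fin p) := ⟨(⟨0, hp.pos⟩, ⟨0, hp.pos⟩)⟩
  have hspan := hLI.span_eq_top_of_card_eq_finrank (by simp [hdim, sq])
  have hcx : Commute (y ^ p) x := by
    have h1 := rel_pow hyX p
    rwa [mul_comm m p, pow_mul, hρ.pow_eq_one, one_pow, one_smul] at h1
  have hcy : Commute (y ^ p) y := (Commute.refl y).pow_left p
  refine hcentral _ fun b => ?_
  have hb : b ∈ Submodule.span F
      (Set.range fun kl : Fin p × Fin p => x ^ (kl.1 : ℕ) * y ^ (kl.2 : ℕ)) := by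
    rw [hspan]; trivial
  induction hb using Submodule.span_induction with
  | mem w hw =>
      obtain ⟨kl, rfl⟩ := hw
      exact (hcx.pow_right _).mul_right (hcy.pow_right _)
  | zero => simp
  | add _ _ _ _ h1 h2 => rw [mul_add, add_mul, h1, h2]
  | smul a _ _ h1 => rw [mul_smul_comm, smul_mul_assoc, h1]

end Aux5

/-- In a central division algebra of prime degree `p`, if a `p`-central element `z`
has exactly two eigencomponents with respect to conjugation by a `p`-central
element `x`, then both eigencomponents have `p`-th power in `F`, and
`z^p = z_i^p + z_j^p`. -/
theorem two_eigencomponents_p_central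
    {F D : Type*} [Field F] [DivisionRing D] [Algebra F D]
    (p : ℕ) (hp : p.Prime) (hpF : (p : F) ≠ 0)
    (ρ : F) (hρ : IsPrimitiveRoot ρ p)
    (hcentral : ∀ a : D, (∀ b : D, a * b = b * a) → ∃ c : F, a = algebraMap F D c)
    (hdim : Module.finrank F D = p ^ 2)
    (x z : D) (α β : F) (hα : α ≠ 0) (hβ : β ≠ 0)
    (hxp : x ^ p = algebraMap F D α) (hzp : z ^ p = algebraMap F D β)
    (hxnc : ∀ s : F, x ≠ algebraMap F D s) (hznc : ∀ s : F, z ≠ algebraMap F D s)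
    (i j : ℕ) (hi : i < p) (hj : j < p) (hij : i ≠ j)
    (zi zj : D) (hzi0 : zi ≠ 0) (hzj0 : zj ≠ 0)
    (hz : z = zi + zj)
    (hziX : zi * x = ρ ^ i • (x * zi)) (hzjX : zj * x = ρ ^ j • (x * zj)) :
    (∃ ci : F, zi ^ p = algebraMap F D ci) ∧
    (∃ cj : F, zj ^ p = algebraMap F D cj) ∧
    z ^ p = zi ^ p + zj ^ p := by
  haveI : Fact p.Prime := ⟨hp⟩
  have hx0 : x ≠ 0 := fun h => hxnc 0 (by rw [h, map_zero])
  have hijZ : ((i : ZMod p)) ≠ (j : ZMod p) := by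
    intro h
    apply hij
    have h2 := congrArg ZMod.val h
    rwa [ZMod.val_cast_of_lt hi, ZMod.val_cast_of_lt hj] at h2
  -- characterization of the zero fiber
  have hchar : ∀ a : ℕ, a ≤ p → ((a * i + (p - a) * j) % p = 0 ↔ a = 0 ∨ a = p) := by
    intro a ha
    have hkey : ((a * i + (p - a) * j : ℕ) : ZMod p) = (a : ZMod p) * ((i : ZMod p) - j) := by
      push_cast [Nat.cast_sub ha, ZMod.natCast_self]
      ring
    constructor
    · intro h0
      have hdvd : p ∣ a * i + (p - a) * j := Nat.dvd_iff_mod_eq_zero.2 h0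
      have hc0 : ((a * i + (p - a) * j : ℕ) : ZMod p) = 0 :=
        (ZMod.natCast_eq_zero_iff _ _).2 hdvd
      rw [hkey] at hc0
      have ha0 : (a : ZMod p) = 0 :=
        (mul_eq_zero.1 hc0).resolve_right (sub_ne_zero.2 hijZ)
      have hpa : p ∣ a := (ZMod.natCast_eq_zero_iff _ _).1 ha0
      rcases Nat.eq_zero_or_pos a with rfl | hapos
      · exact Or.inl rfl
      · exact Or.inr (le_antisymm ha (Nat.le_of_dvd hapos hpa))
    · rintro (rfl | rfl)
      · simp [Nat.mul_mod_right]
      · simp [Nat.mul_mod_right, Nat.sub_self]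
  -- expansion of z ^ p
  obtain ⟨w, hsumw, hrelw, hbigw, hw0, hwp⟩ := exists_expansion hziX hzjX p
  rw [← hz] at hsumw
  set v : ℕ → D := fun b =>
    (∑ a ∈ (Finset.range (p + 1)).filter (fun a => (a * i + (p - a) * j) % p = b), w a)
      - (if b = 0 then z ^ p else 0) with hvdef
  have hvrel : ∀ b ∈ Finset.range p, v b * x = ρ ^ b • (x * v b) := by
    intro b hb
    have h1 : (∑ a ∈ (Finset.range (p + 1)).filter
          (fun a => (a * i + (p - a) * j) % p = b), w a) * x
        = ρ ^ b • (x * ∑ a ∈ (Finset.range (p + 1)).filter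
          (fun a => (a * i + (p - a) * j) % p = b), w a) := by
      apply rel_sum
      intro a ha
      rw [Finset.mem_filter, Finset.mem_range] at ha
      have h2 := hrelw a (by omega)
      rwa [rel_mod hp.pos hρ (a * i + (p - a) * j), ha.2] at h2
    have h2 : (if b = 0 then z ^ p else 0) * x
        = ρ ^ b • (x * (if b = 0 then z ^ p else 0)) := by
      rcases eq_or_ne b 0 with rfl | hb0
      · simp only [if_pos rfl, pow_zero, one_smul, hzp]
        exact Algebra.commutes β x
      · simp [hb0]
    rw [hvdef]
    simp only []
    rw [sub_mul, h1, h2, mul_sub, smul_sub]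
  have hvsum : ∑ b ∈ Finset.range p, v b = 0 := by
    rw [hvdef]
    simp only []
    rw [Finset.sum_sub_distrib]
    rw [Finset.sum_fiberwise_of_maps_to
      (fun a _ => Finset.mem_range.2 (Nat.mod_lt _ hp.pos)) w]
    have hB : ∑ b ∈ Finset.range p, (if b = 0 then z ^ p else 0) = z ^ p := by
      rw [Finset.sum_ite_eq' (Finset.range p) 0 (fun _ => z ^ p),
        if_pos (Finset.mem_range.2 hp.pos)]
    rw [hB, hsumw, sub_self]
  have hv0 := eigen_indep hp.pos hpF hρ hx0 v hvrel hvsum 0 (Finset.mem_range.2 hp.pos)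
  have hfilter : (Finset.range (p + 1)).filter (fun a => (a * i + (p - a) * j) % p = 0)
      = {0, p} := by
    ext a
    simp only [Finset.mem_filter, Finset.mem_range, Finset.mem_insert, Finset.mem_singleton]
    constructor
    · rintro ⟨h1, h2⟩
      exact (hchar a (by omega)).1 h2
    · rintro (rfl | rfl)
      · exact ⟨by omega, (hchar 0 (by omega)).2 (Or.inl rfl)⟩
      · exact ⟨by omega, (hchar _ le_rfl).2 (Or.inr rfl)⟩
  have hsump : z ^ p = zi ^ p + zj ^ p := by
    rw [hvdef] at hv0
    simp only [hfilter, reduceIte] at hv0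
    rw [Finset.sum_pair (Ne.symm hp.ne_zero), hw0, hwp] at hv0
    have h5 := sub_eq_zero.1 hv0
    rw [← h5, add_comm]
  -- part 2 : each component power is scalar
  have hmain : ∀ (k : ℕ), 0 < k → k < p → ∀ y : D, y ≠ 0 →
      y * x = ρ ^ k • (x * y) → ∃ c : F, y ^ p = algebraMap F D c :=
    fun k hk0 hkp y hy0 hyX =>
      pcentral_aux hp hpF hρ hcentral hdim hα hxp hxnc y k hk0 hkp hy0 hyX
  rcases Nat.eq_zero_or_pos i with rfl | hipos
  · -- i = 0, so j > 0
    have hjpos : 0 < j := Nat.pos_of_ne_zero (Ne.symm hij)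
    obtain ⟨cj, hcj⟩ := hmain j hjpos hj zj hzj0 hzjX
    refine ⟨⟨β - cj, ?_⟩, ⟨cj, hcj⟩, hsump⟩
    have : zi ^ p = z ^ p - zj ^ p := by rw [hsump]; abel
    rw [this, hzp, hcj, ← map_sub]
  · obtain ⟨ci, hci⟩ := hmain i hipos hi zi hzi0 hziX
    rcases Nat.eq_zero_or_pos j with rfl | hjpos
    · refine ⟨⟨ci, hci⟩, ⟨β - ci, ?_⟩, hsump⟩
      have : zj ^ p = z ^ p - zi ^ p := by rw [hsump]; abel
      rw [this, hzp, hci, ← map_sub]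
    · obtain ⟨cj, hcj⟩ := hmain j hjpos hj zj hzj0 hzjX
      exact ⟨⟨ci, hci⟩, ⟨cj, hcj⟩, hsump⟩
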